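/- If u ∈ 𝒱 and w ∈ 𝒱, then u + w ∈ 𝒱; that is, if u and w are value functions of polynomial games, then so is the function z ↦ u(z) + w(z). -/
import Mathlib

open Polynomial

/-- The value of a finite two-player zero-sum matrix game with payoff matrix `G`:
`sup` over mixed strategies of Player 1 of `inf` over mixed strategies of Player 2
of the expected payoff. -/
noncomputable def matrixValue {A B : Type} [Fintype A] [Fintype B] (G : A → B → ℝ) : ℝ :=
  ⨆ x : stdSimplex ℝ A, ⨅ y : stdSimplex ℝ B, ∑ a : A, ∑ b : B, x.1 a * G a b * y.1 b

section Aux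

variable {A B : Type} [Fintype A] [Fintype B]

/-- expected payoff -/
noncomputable def pay (G : A → B → ℝ) (x : A → ℝ) (y : B → ℝ) : ℝ :=
  ∑ a : A, ∑ b : B, x a * G a b * y b

lemma simplex_nonneg {x : A → ℝ} (hx : x ∈ stdSimplex ℝ A) (a : A) : 0 ≤ x a := hx.1 a

lemma simplex_sum {x : A → ℝ} (hx : x ∈ stdSimplex ℝ A) : ∑ a : A, x a = 1 := hx.2

lemma simplex_le_one {x : A → ℝ} (hx : x ∈ stdSimplex ℝ A) (a : A) : x a ≤ 1 := by
  have := Finset.single_le_sum (f := x) (fun i _ => hx.1 i) (Finset.mem_univ a)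
  rw [hx.2] at this; exact this

lemma pay_abs_le (G : A → B → ℝ) {x : A → ℝ} {y : B → ℝ}
    (hx : x ∈ stdSimplex ℝ A) (hy : y ∈ stdSimplex ℝ B) :
    |pay G x y| ≤ ∑ a : A, ∑ b : B, |G a b| := by
  refine (Finset.abs_sum_le_sum_abs _ _).trans (Finset.sum_le_sum fun a _ => ?_)
  refine (Finset.abs_sum_le_sum_abs _ _).trans (Finset.sum_le_sum fun b _ => ?_)
  rw [abs_mul, abs_mul, abs_of_nonneg (simplex_nonneg hx a), abs_of_nonneg (simplex_nonneg hy b)]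
  calc x a * |G a b| * y b ≤ 1 * |G a b| * 1 := by
        apply mul_le_mul (mul_le_mul (simplex_le_one hx a) le_rfl (abs_nonneg _) zero_le_one)
          (simplex_le_one hy b) (simplex_nonneg hy b)
        positivity
    _ = |G a b| := by ring

instance [Nonempty A] : Nonempty (stdSimplex ℝ A) := by
  classical
  exact ⟨⟨_, single_mem_stdSimplex ℝ (Classical.arbitrary A)⟩⟩

end Aux

section Prod

variable {A₁ A₂ B₁ B₂ : Type} [Fintype A₁] [Fintype A₂] [Fintype B₁] [Fintype B₂]

/-- first marginal -/
noncomputable def m1 (x : A₁ × A₂ → ℝ) : A₁ → ℝ := fun a => ∑ a2 : A₂, x (a, a2)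

/-- second marginal -/
noncomputable def m2 (x : A₁ × A₂ → ℝ) : A₂ → ℝ := fun a => ∑ a1 : A₁, x (a1, a)

lemma m1_mem {x : A₁ × A₂ → ℝ} (hx : x ∈ stdSimplex ℝ (A₁ × A₂)) :
    m1 x ∈ stdSimplex ℝ A₁ := by
  constructor
  · intro a; exact Finset.sum_nonneg fun a2 _ => hx.1 _
  · rw [← hx.2, Fintype.sum_prod_type]; rfl

lemma m2_mem {x : A₁ × A₂ → ℝ} (hx : x ∈ stdSimplex ℝ (A₁ × A₂)) :
    m2 x ∈ stdSimplex ℝ A₂ := by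
  constructor
  · intro a; exact Finset.sum_nonneg fun a1 _ => hx.1 _
  · rw [← hx.2, Fintype.sum_prod_type_right]; rfl

lemma stdProdMem {x1 : A₁ → ℝ} {x2 : A₂ → ℝ} (h1 : x1 ∈ stdSimplex ℝ A₁)
    (h2 : x2 ∈ stdSimplex ℝ A₂) :
    (fun p : A₁ × A₂ => x1 p.1 * x2 p.2) ∈ stdSimplex ℝ (A₁ × A₂) := by
  constructor
  · intro p; exact mul_nonneg (h1.1 _) (h2.1 _)
  · rw [Fintype.sum_prod_type]
    simp only [← Finset.sum_mul, ← Finset.mul_sum, h1.2, h2.2]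
    simp

lemma m1_prod {x1 : A₁ → ℝ} {x2 : A₂ → ℝ} (h2 : x2 ∈ stdSimplex ℝ A₂) :
    m1 (fun p : A₁ × A₂ => x1 p.1 * x2 p.2) = x1 := by
  funext a; simp [m1, ← Finset.mul_sum, h2.2]

lemma m2_prod {x1 : A₁ → ℝ} {x2 : A₂ → ℝ} (h1 : x1 ∈ stdSimplex ℝ A₁) :
    m2 (fun p : A₁ × A₂ => x1 p.1 * x2 p.2) = x2 := by
  funext a; simp [m2, ← Finset.sum_mul, h1.2]

lemma sum_swap4 {α β γ δ : Type} [Fintype α] [Fintype β] [Fintype γ] [Fintype δ]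
    (f : α → β → γ → δ → ℝ) :
    ∑ b : β, ∑ d : δ, ∑ a : α, ∑ c : γ, f a b c d
      = ∑ a : α, ∑ b : β, ∑ c : γ, ∑ d : δ, f a b c d :=
  calc ∑ b : β, ∑ d : δ, ∑ a : α, ∑ c : γ, f a b c d
      = ∑ b : β, ∑ a : α, ∑ d : δ, ∑ c : γ, f a b c d :=
        Finset.sum_congr rfl fun _ _ => Finset.sum_comm
    _ = ∑ a : α, ∑ b : β, ∑ d : δ, ∑ c : γ, f a b c d := Finset.sum_comm
    _ = ∑ a : α, ∑ b : β, ∑ c : γ, ∑ d : δ, f a b c d :=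
        Finset.sum_congr rfl fun _ _ => Finset.sum_congr rfl fun _ _ => Finset.sum_comm

lemma pay_decomp (G : A₁ → B₁ → ℝ) (H : A₂ → B₂ → ℝ) (x : A₁ × A₂ → ℝ) (y : B₁ × B₂ → ℝ) :
    pay (fun (p : A₁ × A₂) (q : B₁ × B₂) => G p.1 q.1 + H p.2 q.2) x y
      = pay G (m1 x) (m1 y) + pay H (m2 x) (m2 y) := by
  have leaf : ∀ {ι : Type} [Fintype ι] (c : ℝ) (f : A₁ × A₂ → ℝ) (g : ι → ℝ)
      (u : Finset (A₁ × A₂)) (v : Finset ι),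
      (∑ p ∈ u, f p) * c * (∑ i ∈ v, g i) = ∑ p ∈ u, ∑ i ∈ v, f p * c * g i := by
    intro ι _ c f g u v
    rw [Finset.sum_mul, Finset.sum_mul]
    exact Finset.sum_congr rfl fun p _ => Finset.mul_sum _ _ _
  have aux1 : pay G (m1 x) (m1 y)
      = ∑ a1 : A₁, ∑ a2 : A₂, ∑ b1 : B₁, ∑ b2 : B₂, x (a1, a2) * G a1 b1 * y (b1, b2) := by
    unfold pay m1
    refine Finset.sum_congr rfl fun a1 _ => ?_
    calc ∑ b1 : B₁, (∑ a2 : A₂, x (a1, a2)) * G a1 b1 * (∑ b2 : B₂, y (b1, b2))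
        = ∑ b1 : B₁, ∑ a2 : A₂, ∑ b2 : B₂, x (a1, a2) * G a1 b1 * y (b1, b2) :=
          Finset.sum_congr rfl fun b1 _ => by
            have := leaf (G a1 b1) (fun a2 : A₁ × A₂ => 0) (fun b2 : B₂ => y (b1, b2))
            rw [Finset.sum_mul, Finset.sum_mul]
            exact Finset.sum_congr rfl fun a2 _ => Finset.mul_sum _ _ _
      _ = ∑ a2 : A₂, ∑ b1 : B₁, ∑ b2 : B₂, x (a1, a2) * G a1 b1 * y (b1, b2) :=
          Finset.sum_comm
  have aux2 : pay H (m2 x) (m2 y)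
      = ∑ a1 : A₁, ∑ a2 : A₂, ∑ b1 : B₁, ∑ b2 : B₂, x (a1, a2) * H a2 b2 * y (b1, b2) := by
    unfold pay m2
    calc ∑ a2 : A₂, ∑ b2 : B₂, (∑ a1 : A₁, x (a1, a2)) * H a2 b2 * (∑ b1 : B₁, y (b1, b2))
        = ∑ a2 : A₂, ∑ b2 : B₂, ∑ a1 : A₁, ∑ b1 : B₁, x (a1, a2) * H a2 b2 * y (b1, b2) :=
          Finset.sum_congr rfl fun a2 _ => Finset.sum_congr rfl fun b2 _ => by
            rw [Finset.sum_mul, Finset.sum_mul]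
            exact Finset.sum_congr rfl fun a1 _ => Finset.mul_sum _ _ _
      _ = _ := sum_swap4 fun a1 a2 b1 b2 => x (a1, a2) * H a2 b2 * y (b1, b2)
  rw [aux1, aux2, ← Finset.sum_add_distrib]
  simp only [pay, Fintype.sum_prod_type]
  refine Finset.sum_congr rfl fun a1 _ => ?_
  rw [← Finset.sum_add_distrib]
  refine Finset.sum_congr rfl fun a2 _ => ?_
  rw [← Finset.sum_add_distrib]
  refine Finset.sum_congr rfl fun b1 _ => ?_
  rw [← Finset.sum_add_distrib]
  refine Finset.sum_congr rfl fun b2 _ => ?_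
  ring

end Prod

section Value

variable {A₁ A₂ B₁ B₂ : Type} [Fintype A₁] [Fintype A₂] [Fintype B₁] [Fintype B₂]
  [Nonempty A₁] [Nonempty A₂] [Nonempty B₁] [Nonempty B₂]

noncomputable def infPay {A B : Type} [Fintype A] [Fintype B] (G : A → B → ℝ) (x : A → ℝ) : ℝ :=
  ⨅ y : stdSimplex ℝ B, pay G x y.1

lemma matrixValue_eq {A B : Type} [Fintype A] [Fintype B] (G : A → B → ℝ) :
    matrixValue G = ⨆ x : stdSimplex ℝ A, infPay G x.1 := rfl

lemma infPay_bddBelow {A B : Type} [Fintype A] [Fintype B] (G : A → B → ℝ) {x : A → ℝ}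
    (hx : x ∈ stdSimplex ℝ A) :
    BddBelow (Set.range fun y : stdSimplex ℝ B => pay G x y.1) := by
  refine ⟨-(∑ a : A, ∑ b : B, |G a b|), fun v ⟨y, hy⟩ => ?_⟩
  rw [← hy]
  exact neg_le_of_abs_le (pay_abs_le G hx y.2)

lemma infPay_le {A B : Type} [Fintype A] [Fintype B] (G : A → B → ℝ) {x : A → ℝ}
    (hx : x ∈ stdSimplex ℝ A) (y : stdSimplex ℝ B) :
    infPay G x ≤ pay G x y.1 :=
  ciInf_le (infPay_bddBelow G hx) y

lemma infPay_abs_le {A B : Type} [Fintype A] [Fintype B] [Nonempty B] (G : A → B → ℝ)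
    {x : A → ℝ} (hx : x ∈ stdSimplex ℝ A) :
    |infPay G x| ≤ ∑ a : A, ∑ b : B, |G a b| := by
  rw [abs_le]
  constructor
  · exact le_ciInf fun y => neg_le_of_abs_le (pay_abs_le G hx y.2)
  · obtain ⟨y⟩ : Nonempty (stdSimplex ℝ B) := inferInstance
    exact (infPay_le G hx y).trans (le_of_abs_le (pay_abs_le G hx y.2))

/-- The inner infimum splits for the joint game. -/
lemma infPay_joint (G : A₁ → B₁ → ℝ) (H : A₂ → B₂ → ℝ) {x : A₁ × A₂ → ℝ}
    (hx : x ∈ stdSimplex ℝ (A₁ × A₂)) :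
    infPay (fun (p : A₁ × A₂) (q : B₁ × B₂) => G p.1 q.1 + H p.2 q.2) x
      = infPay G (m1 x) + infPay H (m2 x) := by
  set K := fun (p : A₁ × A₂) (q : B₁ × B₂) => G p.1 q.1 + H p.2 q.2 with hK
  have hpd : ∀ y : B₁ × B₂ → ℝ, pay K x y = pay G (m1 x) (m1 y) + pay H (m2 x) (m2 y) := by
    intro y; rw [hK]; exact pay_decomp G H x y
  apply le_antisymm
  · -- ≤ : use product strategies
    have h : ∀ (y1 : stdSimplex ℝ B₁) (y2 : stdSimplex ℝ B₂),
        infPay K x ≤ pay G (m1 x) y1.1 + pay H (m2 x) y2.1 := by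
      intro y1 y2
      have hprod := stdProdMem y1.2 y2.2
      calc infPay K x ≤ pay K x (fun q : B₁ × B₂ => y1.1 q.1 * y2.1 q.2) :=
            infPay_le K hx ⟨_, hprod⟩
        _ = pay G (m1 x) y1.1 + pay H (m2 x) y2.1 := by
            rw [hpd, m1_prod y2.2, m2_prod y1.2]
    have h1 : ∀ y2 : stdSimplex ℝ B₂,
        infPay K x - pay H (m2 x) y2.1 ≤ infPay G (m1 x) := fun y2 =>
      le_ciInf fun y1 => by linarith [h y1 y2]
    have h2 : infPay K x - infPay G (m1 x) ≤ infPay H (m2 x) :=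
      le_ciInf fun y2 => by linarith [h1 y2]
    linarith
  · refine le_ciInf fun y => ?_
    show _ ≤ pay K x y.1
    rw [hpd]
    exact add_le_add (infPay_le G (m1_mem hx) ⟨_, m1_mem y.2⟩)
      (infPay_le H (m2_mem hx) ⟨_, m2_mem y.2⟩)

lemma matrixValue_add (G : A₁ → B₁ → ℝ) (H : A₂ → B₂ → ℝ) :
    matrixValue (fun (p : A₁ × A₂) (q : B₁ × B₂) => G p.1 q.1 + H p.2 q.2)
      = matrixValue G + matrixValue H := by
  set K := fun (p : A₁ × A₂) (q : B₁ × B₂) => G p.1 q.1 + H p.2 q.2 with hK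
  have bddG : BddAbove (Set.range fun x : stdSimplex ℝ A₁ => infPay G x.1) :=
    ⟨∑ a : A₁, ∑ b : B₁, |G a b|, fun v ⟨x, hx⟩ => by
      rw [← hx]; exact le_of_abs_le (infPay_abs_le G x.2)⟩
  have bddH : BddAbove (Set.range fun x : stdSimplex ℝ A₂ => infPay H x.1) :=
    ⟨∑ a : A₂, ∑ b : B₂, |H a b|, fun v ⟨x, hx⟩ => by
      rw [← hx]; exact le_of_abs_le (infPay_abs_le H x.2)⟩
  rw [matrixValue_eq, matrixValue_eq, matrixValue_eq]
  apply le_antisymm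
  · refine ciSup_le fun x => ?_
    rw [infPay_joint G H x.2]
    exact add_le_add (le_ciSup bddG ⟨_, m1_mem x.2⟩) (le_ciSup bddH ⟨_, m2_mem x.2⟩)
  · rw [← le_sub_iff_add_le]
    refine ciSup_le fun x1 => ?_
    rw [le_sub_iff_add_le, add_comm, ← le_sub_iff_add_le]
    refine ciSup_le fun x2 => ?_
    rw [le_sub_iff_add_le, add_comm]
    have hprod := stdProdMem x1.2 x2.2
    have bddK : BddAbove (Set.range fun x : stdSimplex ℝ (A₁ × A₂) => infPay K x.1) := by
      refine ⟨∑ p : A₁ × A₂, ∑ q : B₁ × B₂, |K p q|, fun v ⟨x, hx⟩ => ?_⟩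
      rw [← hx]; exact le_of_abs_le (infPay_abs_le K x.2)
    calc infPay G x1.1 + infPay H x2.1
        = infPay K (fun p : A₁ × A₂ => x1.1 p.1 * x2.1 p.2) := by
          rw [infPay_joint G H hprod, m1_prod x2.2, m2_prod x1.2]
      _ ≤ ⨆ x : stdSimplex ℝ (A₁ × A₂), infPay K x.1 := le_ciSup bddK ⟨_, hprod⟩

end Value

/-- `u ∈ 𝒱`: `u` is the value function of some two-player zero-sum polynomial game,
i.e. there are finite nonempty strategy sets `A`, `B` and a matrix `G` of real polynomials
such that `u z` is the value of the matrix game `G` evaluated at `z`, for every `z`. -/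
def InV (u : ℝ → ℝ) : Prop :=
  ∃ (A B : Type) (iA : Fintype A) (iB : Fintype B), Nonempty A ∧ Nonempty B ∧
    ∃ G : A → B → Polynomial ℝ,
      ∀ z : ℝ, u z = @matrixValue A B iA iB fun a b => (G a b).eval z

/-- If `u` and `w` are value functions of polynomial games, then so is `z ↦ u z + w z`. -/
theorem InV.add (u w : ℝ → ℝ) (hu : InV u) (hw : InV w) :
    InV (fun z => u z + w z) := by
  obtain ⟨A₁, B₁, iA₁, iB₁, hA₁, hB₁, G, hG⟩ := hu
  obtain ⟨A₂, B₂, iA₂, iB₂, hA₂, hB₂, H, hH⟩ := hw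
  letI := iA₁; letI := iB₁; letI := iA₂; letI := iB₂
  haveI := hA₁; haveI := hB₁; haveI := hA₂; haveI := hB₂
  refine ⟨A₁ × A₂, B₁ × B₂, inferInstance, inferInstance, inferInstance, inferInstance,
    fun p q => G p.1 q.1 + H p.2 q.2, fun z => ?_⟩
  have := matrixValue_add (fun (a : A₁) (b : B₁) => (G a b).eval z)
    (fun (a : A₂) (b : B₂) => (H a b).eval z)
  show u z + w z = _
  rw [hG z, hH z]
  simp only [eval_add]
  exact this.symm
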